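/- The sum over all digits A ∈ 𝒜 of the total variation of the derivative h_A' on [0,1] is finite; in particular, for every (a,ε)_s ∈ 𝒜 the total variation of h_{(a,ε)_s}' on [0,1] is at most 4/a², and the series Σ_{A∈𝒜} Var_{[0,1]}(h_A') converges. -/

import Mathlib

open MeasureTheory Real Set Filter Topology

namespace SCF

/-- The involution `ι(x) = (1−x)/(1+x)`. -/
noncomputable def iota (x : ℝ) : ℝ := (1 - x) / (1 + x)

/-- Even continued-fraction step.  For `y ∈ (0,1/2]` one has
`⌊(1/y+1)/2⌋ = k` whenever `1/y ∈ (2k−1, 2k+1)`, so `Te y = |1/y − 2k|`;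
explicitly `Te y = 1/y − 2` on `[1/3,1/2]`, `Te y = 1/y − 2k` on
`[1/(2k+1), 1/(2k))` and `Te y = 2k − 1/y` on `[1/(2k), 1/(2k−1))` (`k ≥ 2`). -/
noncomputable def Te (y : ℝ) : ℝ := |1 / y - 2 * (⌊(1 / y + 1) / 2⌋ : ℝ)|

/-- The spliced continued fraction (SCF) map `T : [0,1] → [0,1]`, with
`T 0 = 0`, `T 1 = 1`.  On `(0,1/2]` it is the even continued fraction map
(see `Te`), and on `(1/2,1)` it is the odd–odd map, which is the conjugate
`ι ∘ Te ∘ ι` of the even map; this agrees with the branchwise definition: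
`T x = (k x − (k−1))/(k − (k+1) x)` on `((k−1)/k, (2k−1)/(2k+1)]` and
`T x = (k − (k+1) x)/(k x − (k−1))` on `((2k−1)/(2k+1), k/(k+1)]` for `k ≥ 2`. -/
noncomputable def T (x : ℝ) : ℝ :=
  if x ≤ 0 then 0
  else if 1 ≤ x then 1
  else if x ≤ 1 / 2 then Te x
  else iota (Te (iota x))

/-- Parity label of a digit: `e` (even cusp) or `o` (odd–odd cusp). -/
inductive Par | e | o
deriving DecidableEq

/-- A candidate SCF digit `(a, ε)_s`. -/
structure Digit where
  a : ℤ
  eps : ℤ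
  s : Par
deriving DecidableEq

/-- The digit set `𝒜 = {(k,ε)_s : k ≥ 2, ε = ±1, s ∈ {e,o}} ∪ {(1,+1)_e}`. -/
def Digit.Valid (d : Digit) : Prop :=
  (2 ≤ d.a ∧ (d.eps = 1 ∨ d.eps = -1)) ∨ (d.a = 1 ∧ d.eps = 1 ∧ d.s = Par.e)

/-- The branch intervals `I_{(a,ε)_s}` of the SCF map. -/
noncomputable def branch (d : Digit) : Set ℝ :=
  match d.s with
  | Par.e =>
      if d.a = 1 then Set.Icc (1/3 : ℝ) (1/2)
      else if d.eps = 1 then Set.Ico (1 / (2 * (d.a : ℝ) + 1)) (1 / (2 * (d.a : ℝ)))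
      else Set.Ico (1 / (2 * (d.a : ℝ))) (1 / (2 * (d.a : ℝ) - 1))
  | Par.o =>
      if d.eps = 1 then
        Set.Ioc ((2 * (d.a : ℝ) - 1) / (2 * (d.a : ℝ) + 1)) ((d.a : ℝ) / ((d.a : ℝ) + 1))
      else
        Set.Ioc (((d.a : ℝ) - 1) / (d.a : ℝ)) ((2 * (d.a : ℝ) - 1) / (2 * (d.a : ℝ) + 1))

open Classical in
/-- The SCF digit of a point `y` (the unique valid digit `d` with `y ∈ I_d`;
well defined for every `y ∈ (0,1)`). -/
noncomputable def digit (y : ℝ) : Digit :=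
  if h : ∃ d : Digit, d.Valid ∧ y ∈ branch d then h.choose else ⟨1, 1, Par.e⟩

/-- The `n`-th SCF digit `(a_n(x), ε_n(x))_{s_n(x)}` of `x`, `n ≥ 1`,
determined by `T^[n−1] x ∈ I_{(a_n,ε_n)_{s_n}}`. -/
noncomputable def dig (n : ℕ) (x : ℝ) : Digit := digit (T^[n - 1] x)

/-- The `n`-th SCF partial quotient `a_n(x)`. -/
noncomputable def a (n : ℕ) (x : ℝ) : ℤ := (dig n x).a

/-- The invariant density `f_μ`. -/
noncomputable def fdens (x : ℝ) : ℝ :=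
  2 / (Real.log (2 + Real.sqrt 3) * (1 - (2 - Real.sqrt 3) * x) * (1 + Real.sqrt 3 * x))

/-- The absolutely continuous `T`-invariant probability measure `μ` on `(0,1)`. -/
noncomputable def mu : Measure ℝ :=
  (volume.restrict (Set.Ioo (0 : ℝ) 1)).withDensity fun x => ENNReal.ofReal (fdens x)

/-- The inverse branches `h_{(a,ε)_s}` of the SCF map `T`. -/
noncomputable def h (d : Digit) (x : ℝ) : ℝ :=
  match d.s with
  | Par.e => 1 / (2 * (d.a : ℝ) + (d.eps : ℝ) * x)
  | Par.o =>
      if d.eps = 1 then (((d.a : ℝ) - 1) * x + (d.a : ℝ)) / ((d.a : ℝ) * x + ((d.a : ℝ) + 1))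
      else ((d.a : ℝ) * x + ((d.a : ℝ) - 1)) / (((d.a : ℝ) + 1) * x + (d.a : ℝ))

/-- Composed inverse branch `h_{A^{(n)}} = h_{A₁} ∘ ⋯ ∘ h_{A_n}` of a word. -/
noncomputable def hWord (l : List Digit) : ℝ → ℝ :=
  l.foldr (fun d g => h d ∘ g) id

/-- The dual inverse branches `bar h_{(b,η)_t}`. -/
noncomputable def hbar (d : Digit) (y : ℝ) : ℝ :=
  match d.s with
  | Par.e => (d.eps : ℝ) / (2 * (d.a : ℝ) + y)
  | Par.o =>
      1 / (1 + (d.eps : ℝ) / (((d.a : ℝ) - ((max 0 d.eps : ℤ) : ℝ)) + 1 / (1 + y)))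

/-- The matrix `M_{(a,ε)_s}` associated with the inverse branch `h_{(a,ε)_s}`. -/
noncomputable def Mdig (d : Digit) : Matrix (Fin 2) (Fin 2) ℝ :=
  match d.s with
  | Par.e => !![0, 1; (d.eps : ℝ), 2 * (d.a : ℝ)]
  | Par.o =>
      !![(d.a : ℝ) - ((max 0 d.eps : ℤ) : ℝ), (d.a : ℝ) - ((max 0 d.eps : ℤ) : ℝ) + (d.eps : ℝ);
         (d.a : ℝ) - ((max 0 d.eps : ℤ) : ℝ) + 1, (d.a : ℝ) - ((max 0 d.eps : ℤ) : ℝ) + (d.eps : ℝ) + 1]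

/-- `M_n(x) = M_{(a₁,ε₁)_{s₁}} ⋯ M_{(a_n,ε_n)_{s_n}}`. -/
noncomputable def Mn (n : ℕ) (x : ℝ) : Matrix (Fin 2) (Fin 2) ℝ :=
  ((List.range n).map fun i => Mdig (digit (T^[i] x))).prod

/-- `P_n(x)`: the `(1,2)`-entry of `M_n(x)` (numerator of the `n`-th convergent). -/
noncomputable def Pc (n : ℕ) (x : ℝ) : ℝ := Mn n x 0 1

/-- `Q_n(x)`: the `(2,2)`-entry of `M_n(x)` (denominator of the `n`-th convergent). -/
noncomputable def Qc (n : ℕ) (x : ℝ) : ℝ := Mn n x 1 1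


lemma eVariationOn_neg' (f : ℝ → ℝ) (s : Set ℝ) :
    eVariationOn (fun x => -f x) s = eVariationOn f s := by
  simp only [eVariationOn, edist_neg_neg]

lemma var_mono_le {f g : ℝ → ℝ} {B : ℝ}
    (heq : Set.EqOn (deriv f) g (Set.Icc 0 1))
    (hg : MonotoneOn g (Set.Icc 0 1)) (hb : g 1 - g 0 ≤ B) :
    eVariationOn (deriv f) (Set.Icc (0:ℝ) 1) ≤ ENNReal.ofReal B := by
  rw [eVariationOn.eq_of_eqOn heq]
  have h01 : (0:ℝ) ∈ Set.Icc (0:ℝ) 1 := Set.left_mem_Icc.mpr (by norm_num)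
  have h11 : (1:ℝ) ∈ Set.Icc (0:ℝ) 1 := Set.right_mem_Icc.mpr (by norm_num)
  have := hg.eVariationOn_le h01 h11
  rw [Set.inter_self] at this
  exact this.trans (ENNReal.ofReal_le_ofReal hb)

lemma var_anti_le {f g : ℝ → ℝ} {B : ℝ}
    (heq : Set.EqOn (deriv f) g (Set.Icc 0 1))
    (hg : AntitoneOn g (Set.Icc 0 1)) (hb : g 0 - g 1 ≤ B) :
    eVariationOn (deriv f) (Set.Icc (0:ℝ) 1) ≤ ENNReal.ofReal B := by
  have : Set.EqOn (deriv f) (fun x => -(fun y => -g y) x) (Set.Icc 0 1) := by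
    intro x hx; simp [heq hx]
  rw [eVariationOn.eq_of_eqOn this, eVariationOn_neg']
  have hmono : MonotoneOn (fun y => -g y) (Set.Icc (0:ℝ) 1) :=
    fun x hx y hy hxy => neg_le_neg (hg hx hy hxy)
  have h01 : (0:ℝ) ∈ Set.Icc (0:ℝ) 1 := Set.left_mem_Icc.mpr (by norm_num)
  have h11 : (1:ℝ) ∈ Set.Icc (0:ℝ) 1 := Set.right_mem_Icc.mpr (by norm_num)
  have := hmono.eVariationOn_le h01 h11
  rw [Set.inter_self] at this
  refine this.trans (ENNReal.ofReal_le_ofReal ?_)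
  linarith

lemma branch_var_le (d : Digit) (hd : d.Valid) :
    eVariationOn (deriv (h d)) (Set.Icc (0:ℝ) 1) ≤ ENNReal.ofReal (4 / (d.a : ℝ) ^ 2) := by
  obtain ⟨a, eps, s⟩ := d
  replace hd : (2 ≤ a ∧ (eps = 1 ∨ eps = -1)) ∨ (a = 1 ∧ eps = 1 ∧ s = Par.e) := hd
  have haZ : 1 ≤ a := by rcases hd with ⟨h1, _⟩ | ⟨h1, _⟩ <;> omega
  have hA : (1:ℝ) ≤ (a:ℝ) := by exact_mod_cast haZ
  have heps : eps = 1 ∨ eps = -1 := by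
    rcases hd with ⟨_, h1⟩ | ⟨_, h1, _⟩
    · exact h1
    · exact Or.inl h1
  set A : ℝ := (a:ℝ) with hAdef
  have hApos : 0 < A := by linarith
  cases s with
  | e =>
    rcases heps with rfl | rfl
    · -- h x = 1/(2A + x)
      have hfun : h ⟨a, 1, Par.e⟩ = fun x => (2*A + x)⁻¹ := by
        funext x; simp [h, one_div, hAdef]
      have key : ∀ x ∈ Set.Icc (0:ℝ) 1,
          HasDerivAt (h ⟨a, 1, Par.e⟩) (-1/(2*A + x)^2) x := by
        intro x hx
        have hne : 2*A + x ≠ 0 := by nlinarith [hx.1]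
        have h1 : HasDerivAt (fun y : ℝ => 2*A + y) 1 x := by
          simpa using (hasDerivAt_id x).const_add (2*A)
        rw [hfun]
        exact h1.inv hne
      have heq : Set.EqOn (deriv (h ⟨a, 1, Par.e⟩)) (fun x => -1/(2*A + x)^2)
          (Set.Icc 0 1) := fun x hx => (key x hx).deriv
      refine var_mono_le heq ?_ ?_
      · intro x hx y hy hxy
        have h1 : 0 < 2*A + x := by nlinarith [hx.1]
        have h2 : (2*A + x)^2 ≤ (2*A + y)^2 := by nlinarith
        have := one_div_le_one_div_of_le (by nlinarith) h2
        simp only [neg_div]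
        linarith
      · have h1 : 1/(2*A + 0)^2 ≤ 4/A^2 := by
          rw [div_le_div_iff₀ (by nlinarith) (by nlinarith)]; nlinarith
        have h2 : 0 < 1/(2*A + 1)^2 := by
          have : 0 < (2*A + 1)^2 := by nlinarith
          positivity
        show -1/(2*A + 1)^2 - -1/(2*A + 0)^2 ≤ 4/A^2
        rw [neg_div, neg_div]; linarith
    · -- eps = -1 : h x = 1/(2A - x)
      have ha2 : (2:ℝ) ≤ A := by
        have : 2 ≤ a := by rcases hd with ⟨h1, _⟩ | ⟨_, h1, _⟩ <;> omega
        rw [hAdef]; exact_mod_cast this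
      have hfun : h ⟨a, -1, Par.e⟩ = fun x => (2*A + -x)⁻¹ := by
        funext x
        show 1 / (2 * (a:ℝ) + ((-1:ℤ):ℝ) * x) = _
        push_cast; rw [one_div, hAdef]; ring_nf
      have key : ∀ x ∈ Set.Icc (0:ℝ) 1,
          HasDerivAt (h ⟨a, -1, Par.e⟩) (1/(2*A - x)^2) x := by
        intro x hx
        have hne : 2*A + -x ≠ 0 := by nlinarith [hx.2]
        have h1 : HasDerivAt (fun y : ℝ => 2*A + -y) (-1) x := by
          simpa using ((hasDerivAt_id x).neg).const_add (2*A)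
        rw [hfun]
        have h2 := h1.inv hne
        refine h2.congr_deriv ?_
        rw [div_eq_div_iff (by positivity) (by positivity)]; ring
      have heq : Set.EqOn (deriv (h ⟨a, -1, Par.e⟩)) (fun x => 1/(2*A - x)^2)
          (Set.Icc 0 1) := fun x hx => (key x hx).deriv
      refine var_mono_le heq ?_ ?_
      · intro x hx y hy hxy
        have h1 : 0 < 2*A - y := by nlinarith [hy.2]
        have h2 : (2*A - y)^2 ≤ (2*A - x)^2 := by nlinarith
        have := one_div_le_one_div_of_le (by nlinarith) h2
        simp only [neg_div]
        linarith
      · have h1 : 1/(2*A - 1)^2 ≤ 4/A^2 := by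
          rw [div_le_div_iff₀ (by nlinarith) (by nlinarith)]; nlinarith
        have h2 : 0 < 1/(2*A - 0)^2 := by
          have : 0 < (2*A - 0)^2 := by nlinarith
          positivity
        show 1/(2*A - 1)^2 - 1/(2*A - 0)^2 ≤ 4/A^2
        linarith
  | o =>
    have ha2 : (2:ℝ) ≤ A := by
      have : 2 ≤ a := by
        rcases hd with ⟨h1, _⟩ | ⟨_, _, h1⟩
        · omega
        · exact absurd h1 (by simp)
      rw [hAdef]; exact_mod_cast this
    rcases heps with rfl | rfl
    · -- h x = ((A-1)x + A)/(Ax + (A+1))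
      have hfun : h ⟨a, 1, Par.o⟩ = fun x => ((A-1)*x + A)/(A*x + (A+1)) := by
        funext x; simp [h, hAdef]
      have key : ∀ x ∈ Set.Icc (0:ℝ) 1,
          HasDerivAt (h ⟨a, 1, Par.o⟩) (-1/(A*x + (A+1))^2) x := by
        intro x hx
        have hpos : 0 < A*x + (A+1) := by nlinarith [hx.1]
        have hc : HasDerivAt (fun y : ℝ => (A-1)*y + A) (A-1) x := by
          simpa using ((hasDerivAt_id x).const_mul (A-1)).add_const A
        have hdd : HasDerivAt (fun y : ℝ => A*y + (A+1)) A x := by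
          simpa using ((hasDerivAt_id x).const_mul A).add_const (A+1)
        rw [hfun]
        have h2 := hc.div hdd hpos.ne'
        refine h2.congr_deriv ?_
        rw [div_eq_div_iff (by positivity) (by positivity)]; ring
      have heq : Set.EqOn (deriv (h ⟨a, 1, Par.o⟩)) (fun x => -1/(A*x + (A+1))^2)
          (Set.Icc 0 1) := fun x hx => (key x hx).deriv
      refine var_mono_le heq ?_ ?_
      · intro x hx y hy hxy
        have h1 : 0 < A*x + (A+1) := by nlinarith [hx.1]
        have h0 : A*x + (A+1) ≤ A*y + (A+1) := by nlinarith
        have h2 : (A*x + (A+1))^2 ≤ (A*y + (A+1))^2 := pow_le_pow_left₀ h1.le h0 2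
        have := one_div_le_one_div_of_le (by nlinarith) h2
        simp only [neg_div]
        linarith
      · have h1 : 1/(A*0 + (A+1))^2 ≤ 4/A^2 := by
          rw [div_le_div_iff₀ (by nlinarith) (by nlinarith)]; nlinarith
        have h2 : 0 < 1/(A*1 + (A+1))^2 := by
          have : 0 < (A*1 + (A+1))^2 := by nlinarith
          positivity
        show -1/(A*1 + (A+1))^2 - -1/(A*0 + (A+1))^2 ≤ 4/A^2
        rw [neg_div, neg_div]; linarith
    · -- h x = (Ax + (A-1))/((A+1)x + A)
      have hfun : h ⟨a, -1, Par.o⟩ = fun x => (A*x + (A-1))/((A+1)*x + A) := by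
        funext x; simp [h, hAdef]
      have key : ∀ x ∈ Set.Icc (0:ℝ) 1,
          HasDerivAt (h ⟨a, -1, Par.o⟩) (1/((A+1)*x + A)^2) x := by
        intro x hx
        have hpos : 0 < (A+1)*x + A := by nlinarith [hx.1]
        have hc : HasDerivAt (fun y : ℝ => A*y + (A-1)) A x := by
          simpa using ((hasDerivAt_id x).const_mul A).add_const (A-1)
        have hdd : HasDerivAt (fun y : ℝ => (A+1)*y + A) (A+1) x := by
          simpa using ((hasDerivAt_id x).const_mul (A+1)).add_const A
        rw [hfun]
        have h2 := hc.div hdd hpos.ne'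
        refine h2.congr_deriv ?_
        rw [div_eq_div_iff (by positivity) (by positivity)]; ring
      have heq : Set.EqOn (deriv (h ⟨a, -1, Par.o⟩)) (fun x => 1/((A+1)*x + A)^2)
          (Set.Icc 0 1) := fun x hx => (key x hx).deriv
      refine var_anti_le heq ?_ ?_
      · intro x hx y hy hxy
        have h1 : 0 < (A+1)*x + A := by nlinarith [hx.1]
        have h0 : (A+1)*x + A ≤ (A+1)*y + A := by nlinarith
        have h2 : ((A+1)*x + A)^2 ≤ ((A+1)*y + A)^2 := pow_le_pow_left₀ h1.le h0 2
        have := one_div_le_one_div_of_le (by nlinarith) h2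
        simp only [neg_div]
        linarith
      · have h1 : 1/((A+1)*0 + A)^2 ≤ 4/A^2 := by
          rw [div_le_div_iff₀ (by nlinarith) (by nlinarith)]; nlinarith
        have h2 : 0 < 1/((A+1)*1 + A)^2 := by
          have : 0 < ((A+1)*1 + A)^2 := by nlinarith
          positivity
        show 1/((A+1)*0 + A)^2 - 1/((A+1)*1 + A)^2 ≤ 4/A^2
        linarith

/-- the total variations of the derivatives of the inverse
branches are summable: `Var_{[0,1]}(h_{(a,ε)_s}') ≤ 4/a²` for each digit and
`Σ_{A ∈ 𝒜} Var_{[0,1]}(h_A') < ∞`. -/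
theorem variation_of_branches_summable :
    (∀ d : Digit, d.Valid →
      eVariationOn (deriv (h d)) (Set.Icc (0 : ℝ) 1) ≤ ENNReal.ofReal (4 / (d.a : ℝ) ^ 2)) ∧
    (∑' d : {d : Digit // d.Valid}, eVariationOn (deriv (h d.1)) (Set.Icc (0 : ℝ) 1)) ≠ ⊤ := by
  refine ⟨branch_var_le, ?_⟩
  set F : ℕ × Bool × Bool → ENNReal := fun p => ENNReal.ofReal (4/((p.1:ℝ)+1)^2) with hF
  set ι : {d : Digit // d.Valid} → ℕ × Bool × Bool :=
    fun d => ((d.1.a - 1).toNat, decide (d.1.eps = 1), decide (d.1.s = Par.e)) with hι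
  have hinj : Function.Injective ι := by
    rintro ⟨⟨a1, e1, s1⟩, hv1⟩ ⟨⟨a2, e2, s2⟩, hv2⟩ hEq
    replace hv1 : (2 ≤ a1 ∧ (e1 = 1 ∨ e1 = -1)) ∨ (a1 = 1 ∧ e1 = 1 ∧ s1 = Par.e) := hv1
    replace hv2 : (2 ≤ a2 ∧ (e2 = 1 ∨ e2 = -1)) ∨ (a2 = 1 ∧ e2 = 1 ∧ s2 = Par.e) := hv2
    simp only [hι, Prod.mk.injEq, decide_eq_decide] at hEq
    obtain ⟨hA, hE, hS⟩ := hEq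
    have h1 : 1 ≤ a1 := by rcases hv1 with ⟨h, _⟩ | ⟨h, _⟩ <;> omega
    have h2 : 1 ≤ a2 := by rcases hv2 with ⟨h, _⟩ | ⟨h, _⟩ <;> omega
    have hE1 : e1 = 1 ∨ e1 = -1 := by
      rcases hv1 with ⟨_, h⟩ | ⟨_, h, _⟩; · exact h
      · exact Or.inl h
    have hE2 : e2 = 1 ∨ e2 = -1 := by
      rcases hv2 with ⟨_, h⟩ | ⟨_, h, _⟩; · exact h
      · exact Or.inl h
    have ha : a1 = a2 := by omega
    have he : e1 = e2 := by
      rcases hE1 with rfl | rfl <;> rcases hE2 with rfl | rfl <;> simp_all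
    have hs : s1 = s2 := by cases s1 <;> cases s2 <;> simp_all
    subst ha; subst he; subst hs; rfl
  have hle : ∀ d : {d : Digit // d.Valid},
      eVariationOn (deriv (h d.1)) (Set.Icc (0:ℝ) 1) ≤ F (ι d) := by
    intro d
    refine (branch_var_le d.1 d.2).trans (le_of_eq ?_)
    have h1 : 1 ≤ d.1.a := by rcases d.2 with ⟨h, _⟩ | ⟨h, _⟩ <;> omega
    have hcast : (((d.1.a - 1).toNat : ℕ) : ℝ) + 1 = (d.1.a : ℝ) := by
      have h2 : ((d.1.a - 1).toNat : ℤ) = d.1.a - 1 := Int.toNat_of_nonneg (by omega)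
      have h3 := congrArg (Int.cast : ℤ → ℝ) h2
      push_cast at h3
      linarith
    simp only [hF, hι, hcast]
  have hmain := ENNReal.summable.tsum_le_tsum_of_inj ι hinj (fun c _ => zero_le) hle
    ENNReal.summable
  refine ne_top_of_le_ne_top ?_ hmain
  have hsum : Summable (fun n : ℕ => 4/((n:ℝ)+1)^2) := by
    have h0 : Summable (fun n : ℕ => 1/((n:ℝ))^2) :=
      summable_one_div_nat_pow.mpr one_lt_two
    have h1 : Summable (fun n : ℕ => 1/(((n+1:ℕ)):ℝ)^2) :=
      (summable_nat_add_iff (f := fun n : ℕ => 1/((n:ℕ):ℝ)^2) 1).mpr h0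
    have h2 := h1.mul_left 4
    refine h2.congr fun n => ?_
    push_cast; ring
  have hnn : ∀ n : ℕ, 0 ≤ 4/((n:ℝ)+1)^2 := fun n => by positivity
  have hsumtop : (∑' n : ℕ, ENNReal.ofReal (4/((n:ℝ)+1)^2)) ≠ ⊤ := by
    rw [← ENNReal.ofReal_tsum_of_nonneg hnn hsum]
    exact ENNReal.ofReal_ne_top
  calc (∑' p : ℕ × Bool × Bool, F p)
      = ∑' (n : ℕ) (b : Bool × Bool), ENNReal.ofReal (4/((n:ℝ)+1)^2) :=
        ENNReal.tsum_prod (f := fun (n : ℕ) (_ : Bool × Bool) => ENNReal.ofReal (4/((n:ℝ)+1)^2))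
    _ = ∑' n : ℕ, 4 * ENNReal.ofReal (4/((n:ℝ)+1)^2) := by
        congr 1; funext n
        rw [tsum_fintype]
        simp [Finset.sum_const]
    _ = 4 * ∑' n : ℕ, ENNReal.ofReal (4/((n:ℝ)+1)^2) := ENNReal.tsum_mul_left
    _ ≠ ⊤ := ENNReal.mul_ne_top (by norm_num) hsumtop

end SCF
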